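/- Let f : ℤ^n → ℂ and fix m ≥ 1. Suppose every (m+1)-fold iterated difference of f vanishes. Then for all x, y ∈ ℤ^n, f(x + y) = Σ over functions k : Fin n → ℕ with Σ k_i ≤ m of (Δ^k f)(x) · Π_i C(y_i, k_i), where Δ^k = Π_i Δ_i^{k_i} and C(y_i, k_i) denotes the (generalized, integer-argument) binomial coefficient y_i choose k_i extended to negative integers. -/

import Mathlib

open Finset

/-- Forward finite difference in direction `i` for functions on the crossing-change lattice. -/
def fdiff {ι : Type*} [DecidableEq ι] (i : ι) (f : (ι → ℤ) → ℂ) : (ι → ℤ) → ℂ :=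
  fun x => f (x + Pi.single i 1) - f x

/-- Iterated finite difference along a list of indices. -/
def fdiffList {ι : Type*} [DecidableEq ι] (l : List ι) (f : (ι → ℤ) → ℂ) : (ι → ℤ) → ℂ :=
  l.foldr fdiff f

/-- `f` is of Vassiliev type ≤ m if every (m+1)-fold iterated difference vanishes. -/
def VasType {ι : Type*} [DecidableEq ι] (m : ℕ) (f : (ι → ℤ) → ℂ) : Prop :=
  ∀ l : List ι, l.length = m + 1 → fdiffList l f = 0

/-- Mixed iterated difference with multiplicity vector k. -/
def fdiffMulti {n : ℕ} (k : Fin n → ℕ) (f : (Fin n → ℤ) → ℂ) : (Fin n → ℤ) → ℂ :=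
  fdiffList ((List.finRange n).flatMap fun i => List.replicate (k i) i) f

/-- Generalized (integer-argument) binomial coefficient y choose k. -/
noncomputable def genChoose (y : ℤ) (k : ℕ) : ℂ :=
  (∏ j ∈ Finset.range k, ((y : ℂ) - j)) / (k.factorial : ℂ)

section basics
variable {ι : Type*} [DecidableEq ι]

lemma fdiffList_nil (f : (ι → ℤ) → ℂ) : fdiffList ([] : List ι) f = f := rfl

lemma fdiffList_cons (a : ι) (l : List ι) (f : (ι → ℤ) → ℂ) :
    fdiffList (a :: l) f = fdiff a (fdiffList l f) := rfl

lemma fdiffList_append (l₁ l₂ : List ι) (f : (ι → ℤ) → ℂ) :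
    fdiffList (l₁ ++ l₂) f = fdiffList l₁ (fdiffList l₂ f) := by
  simp [fdiffList, List.foldr_append]

lemma fdiff_comm (i j : ι) (f : (ι → ℤ) → ℂ) :
    fdiff i (fdiff j f) = fdiff j (fdiff i f) := by
  funext x
  simp only [fdiff]
  rw [add_right_comm]
  ring

lemma fdiffList_perm {l₁ l₂ : List ι} (h : l₁.Perm l₂) (f : (ι → ℤ) → ℂ) :
    fdiffList l₁ f = fdiffList l₂ f := by
  induction h with
  | nil => rfl
  | cons a h ih => simp [fdiffList_cons, ih]
  | swap a b l => simp [fdiffList_cons, fdiff_comm]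
  | trans h1 h2 ih1 ih2 => rw [ih1, ih2]

lemma fdiff_zero (i : ι) : fdiff i (0 : (ι → ℤ) → ℂ) = 0 := by
  funext x; simp [fdiff]

lemma fdiffList_zero (l : List ι) : fdiffList l (0 : (ι → ℤ) → ℂ) = 0 := by
  induction l with
  | nil => rfl
  | cons a l ih => rw [fdiffList_cons, ih, fdiff_zero]

lemma VasType.fdiffList_eq_zero {m : ℕ} {f : (ι → ℤ) → ℂ} (hf : VasType m f)
    {l : List ι} (hl : m + 1 ≤ l.length) : fdiffList l f = 0 := by
  have h : l = l.take (l.length - (m+1)) ++ l.drop (l.length - (m+1)) := (List.take_append_drop _ _).symm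
  rw [h, fdiffList_append, hf _ (by rw [List.length_drop]; omega), fdiffList_zero]

lemma VasType.fdiff {m : ℕ} {f : (ι → ℤ) → ℂ} (hf : VasType (m+1) f) (i : ι) :
    VasType m (_root_.fdiff i f) := by
  intro l hl
  have : fdiffList l (_root_.fdiff i f) = fdiffList (l ++ [i]) f := by
    rw [fdiffList_append]; rfl
  rw [this, hf.fdiffList_eq_zero (by simp [hl])]

end basics

section const
variable {n : ℕ}

lemma const_single {g : (Fin n → ℤ) → ℂ} (h : ∀ i, fdiff i g = 0) (i : Fin n) :
    ∀ (x : Fin n → ℤ) (c : ℤ), g (x + Pi.single i c) = g x := by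
  have step : ∀ x : Fin n → ℤ, g (x + Pi.single i 1) = g x := by
    intro x
    have := congrFun (h i) x
    simp only [fdiff, Pi.zero_apply] at this
    exact sub_eq_zero.mp this
  intro x c
  induction c using Int.induction_on with
  | zero => simp
  | succ c ih =>
      have : x + Pi.single i ((c : ℤ) + 1) = (x + Pi.single i (c : ℤ)) + Pi.single i 1 := by
        rw [add_assoc, ← Pi.single_add]
      rw [this, step, ih]
  | pred c ih =>
      have e : (-((c:ℤ)+1)) + 1 = -(c:ℤ) := by ring
      have key : x + Pi.single i (-(c : ℤ)) = (x + Pi.single i (-((c:ℤ)+1))) + Pi.single i 1 := by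
        rw [add_assoc, ← Pi.single_add, e]
      rw [show -(c:ℤ) - 1 = -((c:ℤ)+1) from by ring, ← ih, key, step]

lemma const_of_fdiff {g : (Fin n → ℤ) → ℂ} (h : ∀ i, fdiff i g = 0)
    (x y : Fin n → ℤ) : g (x + y) = g x := by
  have key : ∀ s : Finset (Fin n), g (x + ∑ i ∈ s, Pi.single i (y i)) = g x := by
    intro s
    induction s using Finset.induction_on with
    | empty => simp
    | insert _ _ ha ih =>
        rw [Finset.sum_insert ha, ← add_assoc, add_right_comm, const_single h _ _ _, ih]
  have := key Finset.univ
  rwa [Finset.univ_sum_single y] at this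

end const

lemma genChoose_zero (y : ℤ) : genChoose y 0 = 1 := by simp [genChoose]

lemma genChoose_zero_left {k : ℕ} (hk : k ≠ 0) : genChoose 0 k = 0 := by
  unfold genChoose
  rw [Finset.prod_eq_zero (Finset.mem_range.mpr (Nat.pos_of_ne_zero hk)) (by simp), zero_div]

lemma genChoose_pascal (y : ℤ) (k : ℕ) :
    genChoose (y + 1) (k + 1) - genChoose y (k + 1) = genChoose y k := by
  have hfac : ((k+1).factorial : ℂ) ≠ 0 := Nat.cast_ne_zero.mpr (Nat.factorial_ne_zero _)
  have hfac2 : (k.factorial : ℂ) ≠ 0 := Nat.cast_ne_zero.mpr (Nat.factorial_ne_zero _)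
  unfold genChoose
  have h1 : ∏ j ∈ Finset.range (k+1), (((y + 1 : ℤ) : ℂ) - j)
      = ((y:ℂ) + 1) * ∏ j ∈ Finset.range k, ((y:ℂ) - j) := by
    rw [Finset.prod_range_succ', mul_comm]
    congr 1
    · push_cast; ring
    · exact Finset.prod_congr rfl fun j _ => by push_cast; ring
  have h2 : ∏ j ∈ Finset.range (k+1), ((y:ℂ) - j)
      = (∏ j ∈ Finset.range k, ((y:ℂ) - j)) * ((y:ℂ) - k) := Finset.prod_range_succ _ _
  rw [h1, h2]
  have hk1 : ((k+1).factorial : ℂ) = ((k:ℂ)+1) * (k.factorial : ℂ) := by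
    rw [Nat.factorial_succ]; push_cast; ring
  rw [hk1, div_sub_div_same, div_eq_div_iff (mul_ne_zero (Nat.cast_add_one_ne_zero k) hfac2) hfac2]
  ring

section multi
variable {n : ℕ}

def multiList (k : Fin n → ℕ) : List (Fin n) :=
  (List.finRange n).flatMap fun i => List.replicate (k i) i

lemma multiList_count (k : Fin n → ℕ) (j : Fin n) : (multiList k).count j = k j := by
  unfold multiList
  rw [List.count_flatMap]
  have : ((List.finRange n).map ((List.count j) ∘ fun i => List.replicate (k i) i)).sum
      = ∑ i, if j = i then k i else 0 := by
    rw [Fin.sum_univ_def]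
    congr 1
    exact List.map_congr_left fun i _ => by
      simp [List.count_replicate]
      split <;> simp_all [eq_comm]
  rw [this, Finset.sum_ite_eq, if_pos (Finset.mem_univ j)]

lemma fdiffMulti_eq (k : Fin n → ℕ) (f : (Fin n → ℤ) → ℂ) :
    fdiffMulti k f = fdiffList (multiList k) f := rfl

lemma multiList_zero : multiList (fun _ : Fin n => 0) = [] := by
  simp [multiList]

lemma fdiffMulti_zero (f : (Fin n → ℤ) → ℂ) : fdiffMulti (fun _ => 0) f = f := by
  rw [fdiffMulti_eq, multiList_zero, fdiffList_nil]

lemma fdiffMulti_succ (k : Fin n → ℕ) (i : Fin n) (f : (Fin n → ℤ) → ℂ) :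
    fdiffMulti (Function.update k i (k i + 1)) f = fdiffMulti k (fdiff i f) := by
  have hperm : (multiList (Function.update k i (k i + 1))).Perm (multiList k ++ [i]) := by
    rw [List.perm_iff_count]
    intro j
    rw [multiList_count, List.count_append, multiList_count]
    by_cases hj : j = i
    · subst hj; simp
    · simp [Function.update_of_ne hj, List.count_singleton', hj, Ne.symm hj]
  rw [fdiffMulti_eq, fdiffList_perm hperm, fdiffList_append]
  rfl

def Sset (n m : ℕ) : Finset (Fin n → ℕ) :=
  (Fintype.piFinset fun _ : Fin n => Finset.range (m+1)).filter fun k => ∑ i, k i ≤ m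

lemma mem_Sset {m : ℕ} {k : Fin n → ℕ} : k ∈ Sset n m ↔ ∑ i, k i ≤ m := by
  unfold Sset
  rw [Finset.mem_filter, Fintype.mem_piFinset]
  constructor
  · rintro ⟨-, h⟩; exact h
  · intro h
    refine ⟨fun i => Finset.mem_range.mpr ?_, h⟩
    exact lt_of_le_of_lt (le_trans (Finset.single_le_sum (fun _ _ => Nat.zero_le _)
      (Finset.mem_univ i)) h) (Nat.lt_succ_self m)

end multi

lemma sum_update_nat {n : ℕ} (k : Fin n → ℕ) (i : Fin n) (b : ℕ) :
    ∑ j, Function.update k i b j = b + ∑ j ∈ Finset.univ.erase i, k j := by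
  rw [Finset.sum_update_of_mem (Finset.mem_univ i), Finset.sdiff_singleton_eq_erase]

lemma sum_split_nat {n : ℕ} (k : Fin n → ℕ) (i : Fin n) :
    ∑ j, k j = k i + ∑ j ∈ Finset.univ.erase i, k j :=
  (Finset.add_sum_erase _ _ (Finset.mem_univ i)).symm

lemma key {n : ℕ} (m : ℕ) : ∀ f : (Fin n → ℤ) → ℂ, VasType m f → ∀ x y : Fin n → ℤ,
    f (x + y) = ∑ k ∈ Sset n m, fdiffMulti k f x * ∏ i, genChoose (y i) (k i) := by
  induction m with
  | zero =>
    intro f hf x y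
    have hS : Sset n 0 = {fun _ => 0} := by
      ext k
      simp only [mem_Sset, Finset.mem_singleton, Nat.le_zero, Finset.sum_eq_zero_iff,
        Finset.mem_univ, forall_true_left, funext_iff]
    rw [hS, Finset.sum_singleton, fdiffMulti_zero]
    simp only [genChoose_zero, Finset.prod_const_one, mul_one]
    exact const_of_fdiff (fun i => hf [i] rfl) x y
  | succ m ih =>
    intro f hf x y
    set S : (Fin n → ℤ) → ℂ :=
      fun z => ∑ k ∈ Sset n (m+1), fdiffMulti k f x * ∏ i, genChoose (z i) (k i) with hSdef
    have hstep : ∀ (i : Fin n) (z : Fin n → ℤ),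
        S (z + Pi.single i 1) - S z = fdiff i f (x + z) := by
      intro i z
      have hterm : ∀ k ∈ Sset n (m+1),
          fdiffMulti k f x * ∏ j, genChoose (((z + Pi.single i 1 : Fin n → ℤ)) j) (k j)
            - fdiffMulti k f x * ∏ j, genChoose (z j) (k j)
          = fdiffMulti k f x * ((genChoose (z i + 1) (k i) - genChoose (z i) (k i))
              * ∏ j ∈ Finset.univ.erase i, genChoose (z j) (k j)) := by
        intro k _
        have hp1 : ∏ j, genChoose (((z + Pi.single i 1 : Fin n → ℤ)) j) (k j)
            = genChoose (z i + 1) (k i) * ∏ j ∈ Finset.univ.erase i, genChoose (z j) (k j) := by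
          rw [← Finset.mul_prod_erase Finset.univ _ (Finset.mem_univ i)]
          congr 1
          · simp
          · refine Finset.prod_congr rfl fun j hj => ?_
            rw [Pi.add_apply, Pi.single_eq_of_ne (Finset.ne_of_mem_erase hj), add_zero]
        have hp2 : ∏ j, genChoose (z j) (k j)
            = genChoose (z i) (k i) * ∏ j ∈ Finset.univ.erase i, genChoose (z j) (k j) :=
          (Finset.mul_prod_erase Finset.univ _ (Finset.mem_univ i)).symm
        rw [hp1, hp2]; ring
      have e1 : S (z + Pi.single i 1) - S z
          = ∑ k ∈ Sset n (m+1), fdiffMulti k f x *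
              ((genChoose (z i + 1) (k i) - genChoose (z i) (k i))
                * ∏ j ∈ Finset.univ.erase i, genChoose (z j) (k j)) := by
        rw [hSdef, ← Finset.sum_sub_distrib]
        exact Finset.sum_congr rfl hterm
      have e2 : ∑ k ∈ Sset n (m+1), fdiffMulti k f x *
              ((genChoose (z i + 1) (k i) - genChoose (z i) (k i))
                * ∏ j ∈ Finset.univ.erase i, genChoose (z j) (k j))
          = ∑ k ∈ (Sset n (m+1)).filter (fun k => k i ≠ 0), fdiffMulti k f x *
              ((genChoose (z i + 1) (k i) - genChoose (z i) (k i))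
                * ∏ j ∈ Finset.univ.erase i, genChoose (z j) (k j)) := by
        refine (Finset.sum_filter_of_ne fun k _ hne => ?_).symm
        intro hk0
        apply hne
        rw [hk0, genChoose_zero, genChoose_zero, sub_self, zero_mul, mul_zero]
      have e3 : ∑ k ∈ (Sset n (m+1)).filter (fun k => k i ≠ 0), fdiffMulti k f x *
              ((genChoose (z i + 1) (k i) - genChoose (z i) (k i))
                * ∏ j ∈ Finset.univ.erase i, genChoose (z j) (k j))
          = ∑ k ∈ Sset n m, fdiffMulti k (fdiff i f) x * ∏ j, genChoose (z j) (k j) := by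
        refine Finset.sum_nbij' (fun k => Function.update k i (k i - 1))
          (fun k => Function.update k i (k i + 1)) ?_ ?_ ?_ ?_ ?_
        · intro k hk
          rw [Finset.mem_filter, mem_Sset] at hk
          have hs := sum_split_nat k i
          simp only [mem_Sset, sum_update_nat]
          omega
        · intro k hk
          rw [mem_Sset] at hk
          have hs := sum_split_nat k i
          simp only [Finset.mem_filter, mem_Sset, sum_update_nat, Function.update_self]
          omega
        · intro k hk
          rw [Finset.mem_filter] at hk
          have h2 := hk.2
          funext j
          by_cases hj : j = i
          · subst hj
            simp only [Function.update_idem, Function.update_self]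
            omega
          · simp only [Function.update_of_ne hj]
        · intro k hk
          funext j
          by_cases hj : j = i
          · subst hj
            simp only [Function.update_idem, Function.update_self]
            omega
          · simp only [Function.update_of_ne hj]
        · intro k hk
          rw [Finset.mem_filter] at hk
          obtain ⟨t, ht⟩ : ∃ t, k i = t + 1 := ⟨k i - 1, by omega⟩
          have hku : k = Function.update (Function.update k i (k i - 1)) i
              ((Function.update k i (k i - 1)) i + 1) := by
            funext j
            by_cases hj : j = i
            · subst hj
              simp only [Function.update_idem, Function.update_self]
              omega
            · simp only [Function.update_of_ne hj]
          have hfd : fdiffMulti k f x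
              = fdiffMulti (Function.update k i (k i - 1)) (fdiff i f) x := by
            conv_lhs => rw [hku]
            rw [fdiffMulti_succ]
          have hprod : ∏ j, genChoose (z j) ((Function.update k i (k i - 1)) j)
              = genChoose (z i) (k i - 1) * ∏ j ∈ Finset.univ.erase i, genChoose (z j) (k j) := by
            rw [← Finset.mul_prod_erase Finset.univ _ (Finset.mem_univ i), Function.update_self]
            congr 1
            refine Finset.prod_congr rfl fun j hj => ?_
            rw [Function.update_of_ne (Finset.ne_of_mem_erase hj)]
          have hpascal : genChoose (z i + 1) (k i) - genChoose (z i) (k i)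
              = genChoose (z i) (k i - 1) := by
            rw [ht, Nat.add_sub_cancel]
            exact genChoose_pascal (z i) t
          rw [hfd, hprod, hpascal]
          try ring
      rw [e1, e2, e3]
      exact (ih (fdiff i f) (hf.fdiff i) x z).symm
    set h : (Fin n → ℤ) → ℂ := fun z => f (x + z) - S z with hhdef
    have hdiff : ∀ i, fdiff i h = 0 := by
      intro i; funext z
      have h1 := hstep i z
      simp only [fdiff] at h1 ⊢
      simp only [hhdef, Pi.zero_apply]
      have hx : x + (z + Pi.single i 1) = (x + z) + Pi.single i 1 := by rw [add_assoc]
      rw [hx]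
      linear_combination -h1
    have h0 : h 0 = 0 := by
      have hS0 : S 0 = f x := by
        have hrfl : S 0 = ∑ k ∈ Sset n (m+1),
            fdiffMulti k f x * ∏ i, genChoose ((0 : Fin n → ℤ) i) (k i) := rfl
        rw [hrfl, Finset.sum_eq_single_of_mem (fun _ : Fin n => 0) (mem_Sset.mpr (by simp))]
        · simp [fdiffMulti_zero, genChoose_zero]
        · intro k hk hne
          have : ∃ i, k i ≠ 0 := by
            by_contra hc; push_neg at hc; exact hne (funext hc)
          obtain ⟨i, hi⟩ := this
          rw [Finset.prod_eq_zero (Finset.mem_univ i) (by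
            simpa using genChoose_zero_left hi), mul_zero]
      simp only [hhdef, add_zero, hS0, sub_self]
    have hy := const_of_fdiff hdiff 0 y
    rw [zero_add, h0] at hy
    have : f (x + y) - S y = 0 := hy
    have := sub_eq_zero.mp this
    exact this

theorem discrete_taylor_expansion {n m : ℕ} (hm : 1 ≤ m)
    (f : (Fin n → ℤ) → ℂ) (hf : VasType m f) (x y : Fin n → ℤ) :
    f (x + y) =
      ∑ k ∈ Finset.univ.filter (fun k : Fin n → Fin (m + 1) => ∑ i, (k i : ℕ) ≤ m),
        fdiffMulti (fun i => (k i : ℕ)) f x * ∏ i, genChoose (y i) (k i : ℕ) := by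
  rw [key m f hf x y]
  refine Finset.sum_bij'
    (fun (k : Fin n → ℕ) (hk : k ∈ Sset n m) => (fun i => (⟨k i, by
      have := mem_Sset.mp hk
      exact lt_of_le_of_lt (le_trans (Finset.single_le_sum (fun _ _ => Nat.zero_le _)
        (Finset.mem_univ i)) this) (Nat.lt_succ_self m)⟩ : Fin (m+1))))
    (fun (k : Fin n → Fin (m+1)) _ => fun i => (k i : ℕ)) ?_ ?_ ?_ ?_ ?_
  · intro k hk
    rw [Finset.mem_filter]
    exact ⟨Finset.mem_univ _, by simpa using mem_Sset.mp hk⟩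
  · intro k hk
    rw [Finset.mem_filter] at hk
    exact mem_Sset.mpr hk.2
  · intro k hk
    rfl
  · intro k hk
    funext i
    exact Fin.ext rfl
  · intro k hk
    rfl
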